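/- Let x : ℕ → ℓ₁ be the Rademacher-type sequence defined in the context. If X ⊆ ℕ is such that ∑_{n∈A_X} 1/√(n+1) < ∞, where A_X = {n ∈ ℕ : P_n ∩ X ≠ ∅}, then ∑_{i∈X} x_i converges unconditionally in ℓ₁. -/

import Mathlib

def tri (n : ℕ) : ℕ := n * (n + 1) / 2

lemma tri_succ (n : ℕ) : tri (n + 1) = tri n + (n + 1) := by
  have h1 : 2 * (n * (n+1) / 2) = n * (n+1) := Nat.two_mul_div_two_of_even (Nat.even_mul_succ_self n)
  have h2 : 2 * ((n+1) * (n+1+1) / 2) = (n+1) * (n+1+1) := Nat.two_mul_div_two_of_even (Nat.even_mul_succ_self (n+1))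
  have h3 : (n+1) * (n+1+1) = n * (n+1) + 2 * (n+1) := by ring
  simp only [tri]
  omega

lemma tri_mono : Monotone tri := by
  apply monotone_nat_of_le_succ
  intro n; rw [tri_succ]; omega

lemma self_le_tri (n : ℕ) : n ≤ tri n := by
  induction n with
  | zero => simp [tri]
  | succ k ih => rw [tri_succ]; omega

def blk (i : ℕ) : ℕ := Nat.findGreatest (fun n => tri n ≤ i) i

lemma blk_le (i : ℕ) : tri (blk i) ≤ i :=
  Nat.findGreatest_spec (P := fun n => tri n ≤ i) (Nat.zero_le i) (by simp [tri])

lemma blk_lt (i : ℕ) : i < tri (blk i + 1) := by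
  by_contra h
  push_neg at h
  have h2 : blk i + 1 ≤ i := le_trans (self_le_tri _) h
  have := Nat.le_findGreatest (P := fun n => tri n ≤ i) h2 h
  simp only [blk] at this
  omega

lemma blk_ge {N i : ℕ} (h : tri N ≤ i) : N ≤ blk i := by
  by_contra hc
  push_neg at hc
  have h1 : tri (blk i + 1) ≤ tri N := tri_mono (Nat.succ_le_of_lt hc)
  have := blk_lt i
  omega


lemma sign_eq_testBit (k a : ℕ) :
    ((-1 : ℝ)) ^ (k / 2 ^ a) = if k.testBit a then -1 else 1 := by
  have h : k.testBit a = decide (k / 2 ^ a % 2 = 1) := Nat.testBit_eq_decide_div_mod_eq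
  rcases Nat.even_or_odd (k / 2 ^ a) with he | ho
  · rw [he.neg_one_pow]
    have : k / 2 ^ a % 2 = 0 := Nat.even_iff.mp he
    simp [h, this]
  · rw [ho.neg_one_pow]
    have : k / 2 ^ a % 2 = 1 := Nat.odd_iff.mp ho
    simp [h, this]

lemma orth {n a b : ℕ} (ha : a < n) (hab : a ≠ b) :
    ∑ k ∈ Finset.range (2 ^ n),
      ((-1 : ℝ)) ^ (k / 2 ^ a) * ((-1 : ℝ)) ^ (k / 2 ^ b) = 0 := by
  apply Finset.sum_involution (fun k _ => k ^^^ 2 ^ a)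
  · intro k hk
    rw [sign_eq_testBit, sign_eq_testBit, sign_eq_testBit, sign_eq_testBit]
    have h1 : (k ^^^ 2 ^ a).testBit a = !k.testBit a := by
      rw [Nat.testBit_xor, Nat.testBit_two_pow]
      simp
    have h2 : (k ^^^ 2 ^ a).testBit b = k.testBit b := by
      rw [Nat.testBit_xor, Nat.testBit_two_pow]
      simp [hab]
    rw [h1, h2]
    cases k.testBit a <;> cases k.testBit b <;> simp
  · intro k hk _
    intro hcon
    have : (k ^^^ 2 ^ a).testBit a = !k.testBit a := by
      rw [Nat.testBit_xor, Nat.testBit_two_pow]; simp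
    rw [hcon] at this
    cases k.testBit a <;> simp_all
  · intro k hk
    simp [Nat.xor_assoc]
  · intro k hk
    rw [Finset.mem_range] at hk ⊢
    exact Nat.xor_lt_two_pow hk (Nat.pow_lt_pow_right one_lt_two ha)

lemma sq_sum (n a : ℕ) :
    ∑ k ∈ Finset.range (2 ^ n),
      ((-1 : ℝ)) ^ (k / 2 ^ a) * ((-1 : ℝ)) ^ (k / 2 ^ a) = 2 ^ n := by
  have : ∀ k, ((-1 : ℝ)) ^ (k / 2 ^ a) * ((-1 : ℝ)) ^ (k / 2 ^ a) = 1 := by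
    intro k
    rw [sign_eq_testBit]
    cases k.testBit a <;> norm_num
  simp [this]

lemma blockB (x : ℕ → lp (fun _ : ℕ => ℝ) 1)
    (hx : ∀ n : ℕ, 1 ≤ n → ∀ j : ℕ, j ≤ n → ∀ k : ℕ, k < 2 ^ n →
      (x (n * (n + 1) / 2 + j) : ℕ → ℝ) (2 ^ n - 1 + k) =
        (-1 : ℝ) ^ (k / 2 ^ (n - j)) / ((n : ℝ) * 2 ^ n))
    (hxsupp : ∀ n : ℕ, 1 ≤ n → ∀ j : ℕ, j ≤ n → ∀ m : ℕ,
      (m < 2 ^ n - 1 ∨ 2 ^ (n + 1) - 1 ≤ m) →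
      (x (n * (n + 1) / 2 + j) : ℕ → ℝ) m = 0)
    {n : ℕ} (hn : 1 ≤ n) (S : Finset ℕ) (hS : S ⊆ Finset.range (n + 1)) :
    ‖∑ j ∈ S, x (n * (n + 1) / 2 + j)‖ ≤ Real.sqrt (n + 1) / n := by
  have hjn : ∀ j ∈ S, j ≤ n := fun j hj => Nat.lt_succ_iff.mp (Finset.mem_range.mp (hS hj))
  set y : lp (fun _ : ℕ => ℝ) 1 := ∑ j ∈ S, x (n * (n + 1) / 2 + j) with hy
  set T : ℕ → ℝ := fun k => ∑ j ∈ S, (-1 : ℝ) ^ (k / 2 ^ (n - j)) with hT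
  have hn0 : (0 : ℝ) < n := by exact_mod_cast hn
  have h2n : (0 : ℝ) < 2 ^ n := by positivity
  -- coordinates of y
  have coord : ∀ m : ℕ, (y : ℕ → ℝ) m = ∑ j ∈ S, (x (n * (n + 1) / 2 + j) : ℕ → ℝ) m := by
    intro m
    rw [hy, lp.coeFn_sum]
    simp
  have hcoordk : ∀ k : ℕ, k < 2 ^ n → (y : ℕ → ℝ) (2 ^ n - 1 + k) = T k / ((n : ℝ) * 2 ^ n) := by
    intro k hk
    rw [coord, hT]
    rw [Finset.sum_div]
    exact Finset.sum_congr rfl fun j hj => hx n hn j (hjn j hj) k hk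
  have hcoord0 : ∀ m : ℕ, (m < 2 ^ n - 1 ∨ 2 ^ (n + 1) - 1 ≤ m) → (y : ℕ → ℝ) m = 0 := by
    intro m hm
    rw [coord]
    exact Finset.sum_eq_zero fun j hj => hxsupp n hn j (hjn j hj) m hm
  -- norm as tsum
  have hnorm : ‖y‖ = ∑' m : ℕ, ‖(y : ℕ → ℝ) m‖ := by
    have hp : (0 : ℝ) < (1 : ENNReal).toReal := by norm_num
    rw [lp.norm_eq_tsum_rpow hp]
    simp [ENNReal.toReal_one, Real.rpow_one]
  set I : Finset ℕ := (Finset.range (2 ^ n)).image (fun k => 2 ^ n - 1 + k) with hI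
  have h1le : 1 ≤ 2 ^ n := Nat.one_le_two_pow
  have h2succ : 2 ^ (n + 1) = 2 ^ n * 2 := pow_succ 2 n
  have htsum : ∑' m : ℕ, ‖(y : ℕ → ℝ) m‖ = ∑ m ∈ I, ‖(y : ℕ → ℝ) m‖ := by
    apply tsum_eq_sum
    intro m hm
    rw [hcoord0 m, norm_zero]
    by_contra hcon
    push_neg at hcon
    apply hm
    rw [hI, Finset.mem_image]
    exact ⟨m - (2 ^ n - 1), Finset.mem_range.mpr (by omega), by omega⟩
  have hIsum : ∑ m ∈ I, ‖(y : ℕ → ℝ) m‖ =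
      ∑ k ∈ Finset.range (2 ^ n), ‖(y : ℕ → ℝ) (2 ^ n - 1 + k)‖ := by
    rw [hI]
    apply Finset.sum_image
    intro a _ b _ h
    dsimp only at h
    omega
  have hnormy : ‖y‖ = (∑ k ∈ Finset.range (2 ^ n), |T k|) / ((n : ℝ) * 2 ^ n) := by
    rw [hnorm, htsum, hIsum, Finset.sum_div]
    apply Finset.sum_congr rfl
    intro k hk
    rw [hcoordk k (Finset.mem_range.mp hk), norm_div, Real.norm_eq_abs, Real.norm_eq_abs,
      abs_of_pos (by positivity : (0:ℝ) < (n : ℝ) * 2 ^ n)]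
  -- orthogonality
  have horth : ∑ k ∈ Finset.range (2 ^ n), T k ^ 2 = S.card * 2 ^ n := by
    have expand : ∀ k, T k ^ 2 = ∑ j ∈ S, ∑ j' ∈ S,
        (-1 : ℝ) ^ (k / 2 ^ (n - j)) * (-1 : ℝ) ^ (k / 2 ^ (n - j')) := by
      intro k
      rw [hT, sq, Finset.sum_mul_sum]
    simp_rw [expand]
    rw [Finset.sum_comm]
    have step : ∀ j ∈ S, ∑ k ∈ Finset.range (2 ^ n), ∑ j' ∈ S,
        (-1 : ℝ) ^ (k / 2 ^ (n - j)) * (-1 : ℝ) ^ (k / 2 ^ (n - j')) = 2 ^ n := by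
      intro j hj
      rw [Finset.sum_comm]
      rw [Finset.sum_eq_single j]
      · exact sq_sum n (n - j)
      · intro j' hj' hne
        have hj'n := hjn j' hj'
        have hjn' := hjn j hj
        have hab : n - j ≠ n - j' := by omega
        rcases lt_trichotomy (n - j) (n - j') with h | h | h
        · exact orth (by omega) hab
        · omega
        · calc ∑ k ∈ Finset.range (2 ^ n),
                (-1 : ℝ) ^ (k / 2 ^ (n - j)) * (-1 : ℝ) ^ (k / 2 ^ (n - j'))
              = ∑ k ∈ Finset.range (2 ^ n),
                (-1 : ℝ) ^ (k / 2 ^ (n - j')) * (-1 : ℝ) ^ (k / 2 ^ (n - j)) :=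
                Finset.sum_congr rfl fun k _ => mul_comm _ _
            _ = 0 := orth (by omega) (by omega)
      · intro h
        exact absurd hj h
    rw [Finset.sum_congr rfl step, Finset.sum_const, nsmul_eq_mul]
  -- Cauchy-Schwarz
  have hCS : (∑ k ∈ Finset.range (2 ^ n), |T k|) ^ 2 ≤ (n + 1 : ℝ) * (2 ^ n) ^ 2 := by
    have := Finset.sum_mul_sq_le_sq_mul_sq (Finset.range (2 ^ n)) (fun _ => (1 : ℝ)) (fun k => |T k|)
    simp only [one_mul, one_pow, Finset.sum_const, Finset.card_range, nsmul_eq_mul, mul_one,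
      sq_abs] at this
    calc (∑ k ∈ Finset.range (2 ^ n), |T k|) ^ 2
        ≤ (2 ^ n : ℕ) * ∑ k ∈ Finset.range (2 ^ n), T k ^ 2 := this
      _ = (2 ^ n : ℕ) * (S.card * 2 ^ n) := by rw [horth]
      _ ≤ (n + 1 : ℝ) * (2 ^ n) ^ 2 := by
          have hcard : (S.card : ℝ) ≤ (n + 1 : ℝ) := by
            have := Finset.card_le_card hS
            rw [Finset.card_range] at this
            exact_mod_cast this
          push_cast
          nlinarith [h2n]
  have hA : (0 : ℝ) ≤ ∑ k ∈ Finset.range (2 ^ n), |T k| :=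
    Finset.sum_nonneg fun k _ => abs_nonneg _
  have hAle : ∑ k ∈ Finset.range (2 ^ n), |T k| ≤ Real.sqrt (n + 1) * 2 ^ n := by
    have h1 : ∑ k ∈ Finset.range (2 ^ n), |T k|
        = Real.sqrt ((∑ k ∈ Finset.range (2 ^ n), |T k|) ^ 2) := (Real.sqrt_sq hA).symm
    rw [h1]
    calc Real.sqrt ((∑ k ∈ Finset.range (2 ^ n), |T k|) ^ 2)
        ≤ Real.sqrt ((n + 1 : ℝ) * (2 ^ n) ^ 2) := Real.sqrt_le_sqrt hCS
      _ = Real.sqrt (n + 1) * 2 ^ n := by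
          rw [Real.sqrt_mul (by positivity), Real.sqrt_sq (le_of_lt h2n)]
  rw [hnormy]
  calc (∑ k ∈ Finset.range (2 ^ n), |T k|) / ((n : ℝ) * 2 ^ n)
      ≤ (Real.sqrt (n + 1) * 2 ^ n) / ((n : ℝ) * 2 ^ n) := by
        exact div_le_div_of_nonneg_right hAle (by positivity)
    _ = Real.sqrt (n + 1) / n := by field_simp


lemma sqrt_div_le {n : ℕ} (hn : 1 ≤ n) :
    Real.sqrt (n + 1) / n ≤ 2 / Real.sqrt (n + 1) := by
  have hn0 : (0 : ℝ) < n := by exact_mod_cast hn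
  have hs : (0 : ℝ) < Real.sqrt (n + 1) := Real.sqrt_pos.mpr (by positivity)
  rw [div_le_div_iff₀ hn0 hs, Real.mul_self_sqrt (by positivity)]
  have : (1 : ℝ) ≤ n := by exact_mod_cast hn
  linarith

open Filter Topology

/-- for the Rademacher-type sequence `x : ℕ → ℓ₁` (described by the
hypotheses `hx0`, `hx`, `hxsupp`), if `∑_{n ∈ A_X} 1/√(n+1) < ∞` where
`A_X = {n : P_n ∩ X ≠ ∅}`, then `∑_{i∈X} x i` converges unconditionally in `ℓ₁`. -/
theorem stmt18 (x : ℕ → lp (fun _ : ℕ => ℝ) 1)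
    (hx0 : ∀ k : ℕ, (x 0 : ℕ → ℝ) k = if k = 0 then 1 else 0)
    (hx : ∀ n : ℕ, 1 ≤ n → ∀ j : ℕ, j ≤ n → ∀ k : ℕ, k < 2 ^ n →
      (x (n * (n + 1) / 2 + j) : ℕ → ℝ) (2 ^ n - 1 + k) =
        (-1 : ℝ) ^ (k / 2 ^ (n - j)) / ((n : ℝ) * 2 ^ n))
    (hxsupp : ∀ n : ℕ, 1 ≤ n → ∀ j : ℕ, j ≤ n → ∀ m : ℕ,
      (m < 2 ^ n - 1 ∨ 2 ^ (n + 1) - 1 ≤ m) →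
      (x (n * (n + 1) / 2 + j) : ℕ → ℝ) m = 0)
    (X : Set ℕ)
    (hAX : Summable
      (fun n : {n : ℕ | (Set.Ico (n * (n + 1) / 2) ((n + 1) * (n + 2) / 2) ∩ X).Nonempty} =>
        (1 : ℝ) / Real.sqrt ((n : ℕ) + 1))) :
    Summable (fun i : X => x i) := by
  classical
  set A : Set ℕ := {n : ℕ | (Set.Ico (n * (n + 1) / 2) ((n + 1) * (n + 2) / 2) ∩ X).Nonempty}
    with hA
  set f : ℕ → ℝ := fun n => (1 : ℝ) / Real.sqrt ((n : ℝ) + 1) with hf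
  have hg : Summable (A.indicator f) := by
    rw [← summable_subtype_iff_indicator]
    exact hAX
  have hind_nonneg : ∀ n, 0 ≤ A.indicator f n := by
    intro n
    apply Set.indicator_nonneg
    intro m _
    positivity
  rw [summable_iff_vanishing]
  intro e he
  obtain ⟨ε, hε, hball⟩ := Metric.mem_nhds_iff.mp he
  obtain ⟨s₀, hs₀⟩ := summable_iff_vanishing.mp hg (Metric.ball 0 (ε / 2))
    (Metric.ball_mem_nhds 0 (by positivity))
  set N : ℕ := max (s₀.sup id + 1) 1 with hN
  refine ⟨(Finset.range (tri N)).subtype (· ∈ X), ?_⟩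
  intro t ht
  apply hball
  rw [Metric.mem_ball, dist_zero_right]
  have htN : ∀ i ∈ t, tri N ≤ (i : ℕ) := by
    intro i hi
    by_contra hc
    push_neg at hc
    exact (Finset.disjoint_left.mp ht hi)
      (Finset.mem_subtype.mpr (Finset.mem_range.mpr hc))
  set t' : Finset ℕ := t.image Subtype.val with ht'
  have hsum_t : ∑ i ∈ t, x ↑i = ∑ i ∈ t', x i := by
    rw [ht', Finset.sum_image (fun a _ b _ h => Subtype.val_injective h)]
  set B : Finset ℕ := t'.image blk with hB
  have hfib : ∑ i ∈ t', x i
      = ∑ n ∈ B, ∑ i ∈ t'.filter (fun i => blk i = n), x i :=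
    (Finset.sum_fiberwise_of_maps_to (fun i hi => Finset.mem_image_of_mem blk hi) _).symm
  have key : ∀ n ∈ B, N ≤ n ∧
      ‖∑ i ∈ t'.filter (fun i => blk i = n), x i‖ ≤ 2 * A.indicator f n := by
    intro n hn
    obtain ⟨i₀, hi₀t', hi₀blk⟩ := Finset.mem_image.mp hn
    obtain ⟨a, hat, rfl⟩ := Finset.mem_image.mp hi₀t'
    have hi₀X : (a : ℕ) ∈ X := a.2
    have hi₀N : tri N ≤ (a : ℕ) := htN a hat
    have hNn : N ≤ n := hi₀blk ▸ blk_ge hi₀N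
    have hn1 : 1 ≤ n := le_trans (le_max_right _ 1) hNn
    have htriS := tri_succ n
    have hmem : n ∈ A := by
      refine ⟨(a : ℕ), ⟨?_, hi₀X⟩⟩
      have h1 : tri n ≤ (a : ℕ) := hi₀blk ▸ blk_le (a : ℕ)
      have h2 : (a : ℕ) < tri (n + 1) := hi₀blk ▸ blk_lt (a : ℕ)
      have e1 : tri n = n * (n + 1) / 2 := rfl
      have e2 : tri (n + 1) = (n + 1) * (n + 2) / 2 := by
        show (n + 1) * (n + 1 + 1) / 2 = (n + 1) * (n + 2) / 2
        norm_num
      constructor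
      · omega
      · omega
    refine ⟨hNn, ?_⟩
    set F : Finset ℕ := t'.filter (fun i => blk i = n) with hF
    have hFmem : ∀ i ∈ F, tri n ≤ i ∧ i < tri n + (n + 1) := by
      intro i hi
      obtain ⟨_, hbi⟩ := Finset.mem_filter.mp hi
      have h1 := blk_le i
      have h2 := blk_lt i
      rw [hbi] at h1 h2
      rw [tri_succ] at h2
      exact ⟨h1, h2⟩
    set S : Finset ℕ := F.image (fun i => i - tri n) with hS
    have e1 : tri n = n * (n + 1) / 2 := rfl
    have hsumF : ∑ i ∈ F, x i = ∑ j ∈ S, x (n * (n + 1) / 2 + j) := by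
      rw [hS, Finset.sum_image (fun a ha b hb h => by
        have h1 := (hFmem a ha).1
        have h2 := (hFmem b hb).1
        omega)]
      apply Finset.sum_congr rfl
      intro i hi
      have h1 := (hFmem i hi).1
      congr 1
      omega
    have hSsub : S ⊆ Finset.range (n + 1) := by
      intro j hj
      obtain ⟨i, hi, rfl⟩ := Finset.mem_image.mp hj
      have := hFmem i hi
      rw [Finset.mem_range]
      omega
    have hb1 : ‖∑ i ∈ F, x i‖ ≤ Real.sqrt (n + 1) / n := by
      rw [hsumF]
      exact blockB x hx hxsupp hn1 S hSsub
    have hb2 : Real.sqrt (n + 1) / n ≤ 2 / Real.sqrt (n + 1) := sqrt_div_le hn1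
    have hb3 : (2 : ℝ) / Real.sqrt (n + 1) = 2 * A.indicator f n := by
      rw [Set.indicator_of_mem hmem, hf]
      ring
    calc ‖∑ i ∈ F, x i‖ ≤ Real.sqrt (n + 1) / n := hb1
      _ ≤ 2 / Real.sqrt (n + 1) := hb2
      _ = 2 * A.indicator f n := hb3
  have hBdisj : Disjoint B s₀ := by
    rw [Finset.disjoint_left]
    intro n hnB hns₀
    have h1 := (key n hnB).1
    have h2 : n ≤ s₀.sup id := Finset.le_sup (f := id) hns₀
    have h3 : s₀.sup id + 1 ≤ N := le_max_left _ _
    omega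
  have hs₀B := hs₀ B hBdisj
  rw [Metric.mem_ball, dist_zero_right, Real.norm_eq_abs] at hs₀B
  have hsumB : ∑ n ∈ B, A.indicator f n < ε / 2 :=
    lt_of_le_of_lt (le_abs_self _) hs₀B
  calc ‖∑ i ∈ t, x ↑i‖
      = ‖∑ n ∈ B, ∑ i ∈ t'.filter (fun i => blk i = n), x i‖ := by rw [hsum_t, hfib]
    _ ≤ ∑ n ∈ B, ‖∑ i ∈ t'.filter (fun i => blk i = n), x i‖ := norm_sum_le _ _
    _ ≤ ∑ n ∈ B, 2 * A.indicator f n := Finset.sum_le_sum fun n hn => (key n hn).2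
    _ = 2 * ∑ n ∈ B, A.indicator f n := by rw [Finset.mul_sum]
    _ < 2 * (ε / 2) := by
        apply mul_lt_mul_of_pos_left hsumB
        norm_num
    _ = ε := by ring
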